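/- For a commutative ring A, the following statements are equivalent: (i) A is a Gelfand ring; (ii) if I and J are ideals of A with I + J = A, then ν(I) + ν(J) = A; (iii) for every family (I_k) of ideals of A, ν(Σ_k I_k) = Σ_k ν(I_k); (iv) for every ideal I of A, Rad(I) = Rad(ν(I)); (v) for every pair of distinct maximal ideals m and m' of A, ν(m) + ν(m') = A; (vi) for every ideal I of A and every maximal ideal m of A, if ν(I) ⊆ m then I ⊆ m; (vii) for every ideal I of A and every maximal ideal m of A, I ⊆ m if and only if ν(I) ⊆ m. -/

import Mathlib

variable {A : Type*} [CommRing A]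

/-- An ideal `I` is pure if for every `f ∈ I` there exists `g ∈ I` with `f * (1 - g) = 0`. -/
def Ideal.IsPure (I : Ideal A) : Prop :=
  ∀ f ∈ I, ∃ g ∈ I, f * (1 - g) = 0

/-- The pure part `ν(I)`: the largest pure ideal contained in `I`
(the sum of all pure ideals contained in `I`). -/
def Ideal.purePart (I : Ideal A) : Ideal A :=
  sSup {J : Ideal A | J.IsPure ∧ J ≤ I}

/-- A purely-prime ideal: a proper pure ideal `P` such that whenever `I`, `J` are pure ideals
with `I * J ≤ P`, either `I ≤ P` or `J ≤ P`. -/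
def Ideal.IsPurelyPrime (P : Ideal A) : Prop :=
  P.IsPure ∧ P ≠ ⊤ ∧
    ∀ I J : Ideal A, I.IsPure → J.IsPure → I * J ≤ P → I ≤ P ∨ J ≤ P

/-- A purely-maximal ideal: a maximal element of the set of proper pure ideals. -/
def Ideal.IsPurelyMaximal (P : Ideal A) : Prop :=
  P.IsPure ∧ P ≠ ⊤ ∧
    ∀ Q : Ideal A, Q.IsPure → Q ≠ ⊤ → P ≤ Q → P = Q

/-- A Gelfand ring: every prime ideal is contained in a unique maximal ideal. -/
def IsGelfandRing (A : Type*) [CommRing A] : Prop :=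
  ∀ p : Ideal A, p.IsPrime → ∃! m : Ideal A, m.IsMaximal ∧ p ≤ m

/-- An mp-ring: every prime ideal contains a unique minimal prime ideal. -/
def IsMpRing (A : Type*) [CommRing A] : Prop :=
  ∀ p : Ideal A, p.IsPrime → ∃! q : Ideal A, q ∈ minimalPrimes A ∧ q ≤ p

/-- The kernel of the canonical map `A → A_p` to the localization at a prime `p`. -/
def Ideal.kerPi (p : Ideal A) (hp : p.IsPrime) : Ideal A :=
  letI := hp
  RingHom.ker (algebraMap A (Localization.AtPrime p))

/-- The unit part `u(I) = {f : f = f * g for some g ∈ I}`. -/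
def Ideal.unitPart (I : Ideal A) : Ideal A where
  carrier := {f | ∃ g ∈ I, f = f * g}
  zero_mem' := ⟨0, I.zero_mem, by ring⟩
  add_mem' := by
    rintro a b ⟨g, hg, ha⟩ ⟨h, hh, hb⟩
    exact ⟨g + h - g * h, I.sub_mem (I.add_mem hg hh) (I.mul_mem_right h hg),
      by linear_combination (1 - h) * ha + (1 - g) * hb⟩
  smul_mem' := by
    rintro c a ⟨g, hg, ha⟩
    exact ⟨g, hg, by rw [smul_eq_mul]; linear_combination c * ha⟩

-- auxiliary lemmas

lemma isPure_bot : (⊥ : Ideal A).IsPure := by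
  intro f hf
  simp only [Ideal.mem_bot] at hf
  exact ⟨0, Ideal.zero_mem _, by simp [hf]⟩

lemma isPure_top : (⊤ : Ideal A).IsPure :=
  fun f _ => ⟨1, Submodule.mem_top, by ring⟩

lemma isPure_sup {I J : Ideal A} (hI : I.IsPure) (hJ : J.IsPure) : (I ⊔ J).IsPure := by
  intro f hf
  rw [Submodule.mem_sup] at hf
  obtain ⟨x, hx, y, hy, hf⟩ := hf
  obtain ⟨gx, hgx, hx0⟩ := hI x hx
  obtain ⟨gy, hgy, hy0⟩ := hJ y hy
  refine ⟨gx + (gy - gx * gy),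
    Submodule.add_mem_sup hgx (J.sub_mem hgy (J.mul_mem_left gx hgy)), ?_⟩
  linear_combination (1 - gy) * hx0 + (1 - gx) * hy0 - (1 - gx) * (1 - gy) * hf

lemma isPure_biSup {ι : Type*} (p : ι → Ideal A) (hp : ∀ i, (p i).IsPure) (s : Finset ι) :
    (⨆ i ∈ s, p i).IsPure := by
  classical
  induction s using Finset.induction_on with
  | empty => simpa using isPure_bot
  | insert _ _ h ih =>
      rw [Finset.iSup_insert]
      exact isPure_sup (hp _) ih

lemma purePart_isPure (I : Ideal A) : I.purePart.IsPure := by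
  intro f hf
  rw [Ideal.purePart, sSup_eq_iSup'] at hf
  obtain ⟨s, hs⟩ := Submodule.mem_iSup_iff_exists_finset.mp hf
  obtain ⟨g, hg, h0⟩ := isPure_biSup _ (fun J : {J : Ideal A | J.IsPure ∧ J ≤ I} => J.2.1) s f hs
  refine ⟨g, ?_, h0⟩
  rw [Ideal.purePart, sSup_eq_iSup']
  exact Submodule.mem_iSup_iff_exists_finset.mpr ⟨s, hg⟩

lemma purePart_le (I : Ideal A) : I.purePart ≤ I := sSup_le fun _ hJ => hJ.2

lemma le_purePart {I J : Ideal A} (h1 : J.IsPure) (h2 : J ≤ I) : J ≤ I.purePart :=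
  le_sSup ⟨h1, h2⟩

lemma purePart_top : (⊤ : Ideal A).purePart = ⊤ :=
  top_le_iff.mp (le_purePart isPure_top le_rfl)

lemma pure_le_of_le_jacobson {P J : Ideal A} (hP : P.IsPure) (h : P ≤ J.jacobson) : P ≤ J := by
  intro f hf
  obtain ⟨g, hg, h0⟩ := hP f hf
  by_cases htop : J ⊔ Ideal.span {1 - g} = ⊤
  · have h1 : (1 : A) ∈ J ⊔ Ideal.span {1 - g} := htop ▸ Submodule.mem_top
    rw [Submodule.mem_sup] at h1
    obtain ⟨j, hj, z, hz, hsum⟩ := h1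
    obtain ⟨c, hc⟩ := Ideal.mem_span_singleton'.mp hz
    have hfj : f = f * j := by linear_combination (-f) * hsum + (-f) * hc + c * h0
    exact hfj ▸ J.mul_mem_left f hj
  · obtain ⟨m, hm, hKm⟩ := Ideal.exists_le_maximal _ htop
    have hmS : m ∈ {K : Ideal A | J ≤ K ∧ K.IsMaximal} := ⟨le_sup_left.trans hKm, hm⟩
    have hJm : J.jacobson ≤ m := sInf_le hmS
    have hgm : g ∈ m := hJm (h hg)
    have h1g : (1 : A) - g ∈ m := hKm (Submodule.mem_sup_right (Ideal.mem_span_singleton_self _))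
    exact absurd ((Ideal.eq_top_iff_one m).mpr (by simpa using m.add_mem h1g hgm)) hm.ne_top

lemma mem_unitPart {I : Ideal A} {a : A} : a ∈ I.unitPart ↔ ∃ g ∈ I, a = a * g := Iff.rfl

lemma unitPart_le (I : Ideal A) : I.unitPart ≤ I := by
  rintro a ⟨g, hg, hag⟩
  exact hag ▸ I.mul_mem_left a hg

/-- The ideal `{b | ∃ s ∉ m, s*b = 0}` for a prime `m`. -/
def ker0 (m : Ideal A) (hm : m.IsPrime) : Ideal A where
  carrier := {b | ∃ s, s ∉ m ∧ s * b = 0}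
  zero_mem' := ⟨1, fun h => hm.ne_top ((Ideal.eq_top_iff_one m).mpr h), mul_zero 1⟩
  add_mem' := by
    rintro a b ⟨s, hs, hs0⟩ ⟨t, ht, ht0⟩
    refine ⟨s * t, fun h => ?_, by linear_combination t * hs0 + s * ht0⟩
    rcases hm.mem_or_mem h with h | h
    · exact hs h
    · exact ht h
  smul_mem' := by
    rintro c a ⟨s, hs, h0⟩
    exact ⟨s, hs, by rw [smul_eq_mul]; linear_combination c * h0⟩

lemma gelfand_sep (hA : IsGelfandRing A) {m m' : Ideal A} (hm : m.IsMaximal)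
    (hm' : m'.IsMaximal) (hne : m ≠ m') : ∃ a b, a ∉ m ∧ b ∉ m' ∧ a * b = 0 := by
  by_contra hc
  push_neg at hc
  have h1m : (1 : A) ∉ m := fun h => hm.ne_top ((Ideal.eq_top_iff_one m).mpr h)
  have h1m' : (1 : A) ∉ m' := fun h => hm'.ne_top ((Ideal.eq_top_iff_one m').mpr h)
  set S : Submonoid A :=
    { carrier := {x | ∃ a b, a ∉ m ∧ b ∉ m' ∧ a * b = x}
      one_mem' := ⟨1, 1, h1m, h1m', one_mul 1⟩
      mul_mem' := by
        rintro x y ⟨a, b, ha, hb, rfl⟩ ⟨c, d, hc', hd, rfl⟩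
        refine ⟨a * c, b * d, fun h => ?_, fun h => ?_, by ring⟩
        · rcases hm.isPrime.mem_or_mem h with h | h
          · exact ha h
          · exact hc' h
        · rcases hm'.isPrime.mem_or_mem h with h | h
          · exact hb h
          · exact hd h } with hS
  have hdisj : Disjoint ((⊥ : Ideal A) : Set A) (S : Set A) := by
    rw [Set.disjoint_left]
    rintro x hx ⟨a, b, ha, hb, hab⟩
    rw [SetLike.mem_coe, Ideal.mem_bot] at hx
    exact hc a b ha hb (hab.trans hx)
  obtain ⟨p, hp, -, hpS⟩ := Ideal.exists_le_prime_disjoint (⊥ : Ideal A) S hdisj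
  have hpm : p ≤ m := by
    intro x hx
    by_contra hxm
    exact Set.disjoint_left.mp hpS hx ⟨x, 1, hxm, h1m', mul_one x⟩
  have hpm' : p ≤ m' := by
    intro x hx
    by_contra hxm'
    exact Set.disjoint_left.mp hpS hx ⟨1, x, h1m, hxm', one_mul x⟩
  obtain ⟨M, -, hu⟩ := hA p hp
  exact hne ((hu m ⟨hm, hpm⟩).trans (hu m' ⟨hm', hpm'⟩).symm)

lemma gelfand_key (hA : IsGelfandRing A) {m : Ideal A} (hm : m.IsMaximal) {f : A}
    (hf : f ∉ m) : ∃ a, a ∉ m ∧ ∃ c, a = a * (c * f) := by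
  have htop : Ideal.span {f} ⊔ ker0 m hm.isPrime = ⊤ := by
    by_contra h
    obtain ⟨m', hm', hle⟩ := Ideal.exists_le_maximal _ h
    have hfm' : f ∈ m' := hle (Submodule.mem_sup_left (Ideal.mem_span_singleton_self f))
    have hne : m ≠ m' := fun h => hf (h ▸ hfm')
    obtain ⟨a, b, ha, hb, hab⟩ := gelfand_sep hA hm hm' hne
    exact hb (hle (Submodule.mem_sup_right (show b ∈ ker0 m hm.isPrime from ⟨a, ha, hab⟩)))
  have h1 : (1 : A) ∈ Ideal.span {f} ⊔ ker0 m hm.isPrime := htop ▸ Submodule.mem_top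
  rw [Submodule.mem_sup] at h1
  obtain ⟨y, hy, b, hb, hsum⟩ := h1
  obtain ⟨c, hc⟩ := Ideal.mem_span_singleton'.mp hy
  obtain ⟨s, hs, hs0⟩ := hb
  exact ⟨s, hs, c, by linear_combination (-s) * hsum + (-s) * hc + hs0⟩

lemma gelfand_unitPart_isPure (hA : IsGelfandRing A) (I : Ideal A) : I.unitPart.IsPure := by
  intro a ha
  obtain ⟨g, hg, hag⟩ := mem_unitPart.mp ha
  have htop : I.unitPart ⊔ Ideal.span {1 - g} = ⊤ := by
    by_contra h
    obtain ⟨m, hm, hle⟩ := Ideal.exists_le_maximal _ h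
    have h1g : (1 : A) - g ∈ m := hle (Submodule.mem_sup_right (Ideal.mem_span_singleton_self _))
    have hgm : g ∉ m := fun hgm =>
      hm.ne_top ((Ideal.eq_top_iff_one m).mpr (by simpa using m.add_mem h1g hgm))
    obtain ⟨a', ha', c, hc⟩ := gelfand_key hA hm hgm
    exact ha' (hle (Submodule.mem_sup_left
      (mem_unitPart.mpr ⟨c * g, I.mul_mem_left c hg, hc⟩)))
  have h1 : (1 : A) ∈ I.unitPart ⊔ Ideal.span {1 - g} := htop ▸ Submodule.mem_top
  rw [Submodule.mem_sup] at h1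
  obtain ⟨h, hmem, z, hz, hsum⟩ := h1
  obtain ⟨d, hd⟩ := Ideal.mem_span_singleton'.mp hz
  exact ⟨h, hmem, by linear_combination (-a) * hsum + (-a) * hd + d * hag⟩


universe u

/-- pure part characterization of Gelfand rings. -/
theorem gelfand_tfae_purePart (A : Type u) [CommRing A] :
    List.TFAE
      [ IsGelfandRing A,
        ∀ I J : Ideal A, I + J = ⊤ → I.purePart + J.purePart = ⊤,
        ∀ (ι : Type u) (I : ι → Ideal A),
          (⨆ k, I k).purePart = ⨆ k, (I k).purePart,
        ∀ I : Ideal A, I.jacobson = I.purePart.jacobson,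
        ∀ m m' : Ideal A, m.IsMaximal → m'.IsMaximal → m ≠ m' →
          m.purePart + m'.purePart = ⊤,
        ∀ I m : Ideal A, m.IsMaximal → I.purePart ≤ m → I ≤ m,
        ∀ I m : Ideal A, m.IsMaximal → (I ≤ m ↔ I.purePart ≤ m) ] := by

  tfae_have 1 → 6 := by
    intro hA I m hm hle f hf
    by_contra hfm
    obtain ⟨a, ham, c, hc⟩ := gelfand_key hA hm hfm
    have haU : a ∈ I.unitPart := mem_unitPart.mpr ⟨c * f, I.mul_mem_left c hf, hc⟩
    exact ham (hle (le_purePart (gelfand_unitPart_isPure hA I) (unitPart_le I) haU))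
  tfae_have 6 → 7 := by
    intro h6 I m hm
    exact ⟨fun h => (purePart_le I).trans h, h6 I m hm⟩
  tfae_have 7 → 6 := by
    intro h7 I m hm h
    exact (h7 I m hm).mpr h
  tfae_have 7 → 4 := by
    intro h7 I
    rw [Ideal.jacobson, Ideal.jacobson]
    congr 1
    ext J
    simp only [Set.mem_setOf_eq]
    constructor
    · rintro ⟨h, hJ⟩
      exact ⟨(h7 I J hJ).mp h, hJ⟩
    · rintro ⟨h, hJ⟩
      exact ⟨(h7 I J hJ).mpr h, hJ⟩
  tfae_have 4 → 6 := by
    intro h4 I m hm h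
    have hm' : m ∈ {K : Ideal A | I.purePart ≤ K ∧ K.IsMaximal} := ⟨h, hm⟩
    calc I ≤ I.jacobson := Ideal.le_jacobson
      _ = I.purePart.jacobson := h4 I
      _ ≤ m := sInf_le hm'
  tfae_have 6 → 3 := by
    intro h6 ι I
    apply le_antisymm
    · apply pure_le_of_le_jacobson (purePart_isPure _)
      rw [Ideal.jacobson]
      apply le_sInf
      rintro m ⟨hJm, hm⟩
      have hk : ∀ k, I k ≤ m := fun k => h6 _ m hm ((le_iSup (fun k => (I k).purePart) k).trans hJm)
      exact (purePart_le _).trans (iSup_le hk)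
    · exact iSup_le fun k => le_purePart (purePart_isPure _)
        ((purePart_le _).trans (le_iSup I k))
  tfae_have 3 → 2 := by
    intro h3 I J hIJ
    rw [Submodule.add_eq_sup] at hIJ
    have h := h3 (ULift Bool) (fun k => if k.down then I else J)
    have hsup : (⨆ k : ULift Bool, if k.down then I else J) = I ⊔ J := by
      apply le_antisymm
      · apply iSup_le
        rintro ⟨_ | _⟩
        · simpa using le_sup_right
        · simpa using le_sup_left
      · apply sup_le
        · exact le_iSup_of_le ⟨true⟩ (by simp)
        · exact le_iSup_of_le ⟨false⟩ (by simp)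
    have hsup' : (⨆ k : ULift Bool, (if k.down then I else J).purePart)
        = I.purePart ⊔ J.purePart := by
      apply le_antisymm
      · apply iSup_le
        rintro ⟨_ | _⟩
        · simpa using le_sup_right
        · simpa using le_sup_left
      · apply sup_le
        · exact le_iSup_of_le ⟨true⟩ (by simp)
        · exact le_iSup_of_le ⟨false⟩ (by simp)
    rw [hsup, hIJ] at h
    rw [Submodule.add_eq_sup, ← hsup', ← h, purePart_top]
  tfae_have 2 → 5 := by
    intro h2 m m' hm hm' hne
    apply h2
    rw [Submodule.add_eq_sup]
    have hne' : ¬ m' ≤ m := fun h => hne (hm'.eq_of_le hm.ne_top h).symm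
    exact (Ideal.isMaximal_def.mp hm).2 _ (left_lt_sup.mpr hne')
  tfae_have 5 → 1 := by
    intro h5 p hp
    obtain ⟨m, hm, hpm⟩ := Ideal.exists_le_maximal p hp.ne_top
    refine ⟨m, ⟨hm, hpm⟩, ?_⟩
    rintro m' ⟨hm', hpm'⟩
    by_contra hne
    have htop := h5 m' m hm' hm hne
    rw [Submodule.add_eq_sup] at htop
    have h1 : (1 : A) ∈ m'.purePart ⊔ m.purePart := htop ▸ Submodule.mem_top
    rw [Submodule.mem_sup] at h1
    obtain ⟨g, hg, h', hh, hsum⟩ := h1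
    obtain ⟨g2, hg2, h0⟩ := purePart_isPure m' g hg
    have h0p : g * (1 - g2) ∈ p := h0 ▸ p.zero_mem
    rcases hp.mem_or_mem h0p with hgp | hgp
    · exact hm.ne_top ((Ideal.eq_top_iff_one m).mpr
        (hsum ▸ m.add_mem (hpm hgp) (purePart_le m hh)))
    · exact hm'.ne_top ((Ideal.eq_top_iff_one m').mpr
        (by simpa using m'.add_mem (hpm' hgp) (purePart_le m' hg2)))
  tfae_finish
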